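/- If k is an even positive integer and h is an odd positive integer, then T(h,k) = 1. -/

import Mathlib

/-- `T(h,k) := ∑_{j=1}^{2k-1} (-1)^{j+1+⌊hj/k⌋}`. -/
def Tpair (h k : ℕ) : ℤ := ∑ j ∈ Finset.Icc 1 (2 * k - 1), (-1 : ℤ) ^ (j + 1 + h * j / k)

theorem stmt_18 (h k : ℕ) (hh : 0 < h) (hk : 0 < k) (hko : Even k) (hho : Odd h) :
    Tpair h k = 1 := by
  have hkh : Odd (k + h) := Even.add_odd hko hho
  have key : ∀ j : ℕ, (-1 : ℤ) ^ ((j + k) + 1 + h * (j + k) / k)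
      = -(-1 : ℤ) ^ (j + 1 + h * j / k) := by
    intro j
    have hdiv : h * (j + k) / k = h * j / k + h := by
      rw [Nat.mul_add, Nat.add_mul_div_right _ _ hk]
    rw [hdiv]
    have he : (j + k) + 1 + (h * j / k + h) = (j + 1 + h * j / k) + (k + h) := by ring
    rw [he, pow_add, hkh.neg_one_pow]
    ring
  unfold Tpair
  have hset : Finset.Icc 1 (2 * k - 1) = Finset.Ico 1 (2 * k) := by
    ext x; simp; omega
  rw [hset, ← Finset.sum_Ico_consecutive _ (by omega : 1 ≤ k) (by omega : k ≤ 2 * k)]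
  have h2 : ∑ j ∈ Finset.Ico k (2 * k), (-1 : ℤ) ^ (j + 1 + h * j / k)
      = ∑ i ∈ Finset.range k, (-1 : ℤ) ^ ((i + k) + 1 + h * (i + k) / k) := by
    rw [Finset.sum_Ico_eq_sum_range]
    have : 2 * k - k = k := by omega
    rw [this]
    exact Finset.sum_congr rfl fun i _ => by rw [add_comm k i]
  rw [h2]
  have h3 : ∑ i ∈ Finset.range k, (-1 : ℤ) ^ ((i + k) + 1 + h * (i + k) / k)
      = -∑ i ∈ Finset.range k, (-1 : ℤ) ^ (i + 1 + h * i / k) := by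
    rw [← Finset.sum_neg_distrib]
    exact Finset.sum_congr rfl fun i _ => key i
  rw [h3, Finset.range_eq_Ico, Finset.sum_eq_sum_Ico_succ_bot hk]
  have h0 : h * 0 / k = 0 := by simp
  rw [h0]
  ring_nf
  simp [Nat.mul_comm h]
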